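/- Let P be a finite poset of cardinality n ≥ 2 in which every element x satisfies |{y ∈ P : y > x}| ≤ υ (maximum outdegree at most υ) and |{y ∈ P : y < x}| ≤ δ (maximum indegree at most δ). Then the 2-dimension of P is at most ⌈e·(υ + 2)·(log n + log(υ + 2) + log(δ + 2) + 1)⌉. -/

import Mathlib

open Finset

/-- The 2-dimension of a poset `P`: the least `d` such that there is an order
embedding of `P` into the powerset of `{1,…,d}` ordered by inclusion. -/
noncomputable def dim2 (P : Type*) [PartialOrder P] : ℕ :=
  sInf {d : ℕ | ∃ f : P → Finset (Fin d), ∀ a b : P, (f a ⊆ f b ↔ a ≤ b)}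


/-- If `E` only depends on coordinates satisfying `p` and `F` only on coordinates not
satisfying `p`, then `E` and `F` are independent (in counting form). -/
lemma indep_card_mul {α V : Type*} [Fintype α] [Fintype V] [DecidableEq α] [DecidableEq V]
    (p : α → Prop) [DecidablePred p] (E F : Finset (α → V))
    (hE : ∀ ω ω' : α → V, (∀ a, p a → ω a = ω' a) → (ω ∈ E ↔ ω' ∈ E))
    (hF : ∀ ω ω' : α → V, (∀ a, ¬ p a → ω a = ω' a) → (ω ∈ F ↔ ω' ∈ F)) :
    (E ∩ F).card * Fintype.card (α → V) = E.card * F.card := by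
  classical
  set e := Equiv.piEquivPiSubtypeProd p (fun _ : α => V) with he
  set E₁ : Finset ({x // p x} → V) := E.image (fun ω a => ω a.1) with hE₁
  set F₂ : Finset ({x // ¬ p x} → V) := F.image (fun ω a => ω a.1) with hF₂
  have memE : ∀ ω : α → V, ω ∈ E ↔ (fun a : {x // p x} => ω a.1) ∈ E₁ := by
    intro ω
    constructor
    · intro h; exact mem_image_of_mem _ h
    · intro h
      rw [hE₁, mem_image] at h
      obtain ⟨ω', hω', hfe⟩ := h
      refine (hE ω' ω ?_).1 hω'
      intro a ha
      have := congrFun hfe ⟨a, ha⟩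
      simpa using this
  have memF : ∀ ω : α → V, ω ∈ F ↔ (fun a : {x // ¬ p x} => ω a.1) ∈ F₂ := by
    intro ω
    constructor
    · intro h; exact mem_image_of_mem _ h
    · intro h
      rw [hF₂, mem_image] at h
      obtain ⟨ω', hω', hfe⟩ := h
      refine (hF ω' ω ?_).1 hω'
      intro a ha
      have := congrFun hfe ⟨a, ha⟩
      simpa using this
  -- images under the equivalence
  have key : ∀ (G : Finset (α → V)) (G₁ : Finset ({x // p x} → V)) (G₂ : Finset ({x // ¬p x} → V)),
      (∀ ω : α → V, ω ∈ G ↔ ((fun a : {x // p x} => ω a.1) ∈ G₁ ∧ (fun a : {x // ¬p x} => ω a.1) ∈ G₂)) →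
      G.card = G₁.card * G₂.card := by
    intro G G₁ G₂ hmem
    have : G.image e = G₁ ×ˢ G₂ := by
      ext gh
      simp only [mem_image, mem_product]
      constructor
      · rintro ⟨ω, hω, rfl⟩
        have := (hmem ω).1 hω
        convert this using 2 <;> rfl
      · rintro ⟨h1, h2⟩
        refine ⟨e.symm gh, ?_, e.apply_symm_apply gh⟩
        rw [hmem]
        constructor
        · convert h1 with a
          rw [he, Equiv.piEquivPiSubtypeProd_symm_apply, dif_pos a.2]
        · convert h2 with a
          rw [he, Equiv.piEquivPiSubtypeProd_symm_apply, dif_neg a.2]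
    calc G.card = (G.image e).card := (card_image_of_injective _ e.injective).symm
    _ = (G₁ ×ˢ G₂).card := by rw [this]
    _ = G₁.card * G₂.card := card_product _ _
  have hEc : E.card = E₁.card * (Fintype.card ({x // ¬p x} → V)) := by
    rw [← card_univ]
    exact key E E₁ univ (fun ω => by simpa using memE ω)
  have hFc : F.card = (Fintype.card ({x // p x} → V)) * F₂.card := by
    rw [← card_univ]
    exact key F univ F₂ (fun ω => by simpa using memF ω)
  have hIc : (E ∩ F).card = E₁.card * F₂.card := by
    refine key _ E₁ F₂ (fun ω => ?_)
    rw [mem_inter, memE, memF]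
  have hΩ : Fintype.card (α → V) = Fintype.card ({x // p x} → V) * Fintype.card ({x // ¬p x} → V) := by
    rw [← Fintype.card_prod]
    exact Fintype.card_congr e
  rw [hEc, hFc, hIc, hΩ]; ring


/-- The set of points avoiding all bad events indexed by `S`. -/
noncomputable def NN {Ω ι : Type*} [Fintype Ω] (B : ι → Finset Ω) (S : Finset ι) : Finset Ω :=
  @Finset.filter _ (fun ω => ∀ k ∈ S, ω ∉ B k) (Classical.decPred _) Finset.univ

lemma mem_NN {Ω ι : Type*} [Fintype Ω] (B : ι → Finset Ω) (S : Finset ι) (ω : Ω) :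
    ω ∈ NN B S ↔ ∀ k ∈ S, ω ∉ B k := by
  classical
  simp [NN]

lemma NN_insert {Ω ι : Type*} [Fintype Ω] [DecidableEq Ω] [DecidableEq ι] (B : ι → Finset Ω) (S : Finset ι)
    (a : ι) : NN B (insert a S) = NN B S \ B a := by
  ext ω
  simp only [mem_NN, Finset.mem_sdiff, Finset.mem_insert]
  constructor
  · intro h; exact ⟨fun k hk => h k (Or.inr hk), h a (Or.inl rfl)⟩
  · rintro ⟨h1, h2⟩ k (rfl | hk)
    · exact h2
    · exact h1 k hk

/-- Counting form of the symmetric Lovász Local Lemma. -/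
lemma lll {Ω ι : Type*} [Fintype Ω] [DecidableEq Ω] [Fintype ι] [DecidableEq ι] [Nonempty Ω]
    (B : ι → Finset Ω) (Γ : ι → Finset ι) (x : ℝ) (D : ℕ)
    (hx0 : 0 < x) (hx1 : x < 1)
    (hself : ∀ j, j ∈ Γ j)
    (hΓ : ∀ j, (Γ j).card ≤ D + 1)
    (hprob : ∀ j, ((B j).card : ℝ) ≤ x * (1-x)^D * Fintype.card Ω)
    (hind : ∀ j (S : Finset ι), (∀ k ∈ S, k ∉ Γ j) →
      (((B j ∩ NN B S).card : ℝ)) * Fintype.card Ω = (B j).card * ((NN B S).card : ℝ)) :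
    ∃ ω : Ω, ∀ j, ω ∉ B j := by
  have hΩpos : (0 : ℝ) < Fintype.card Ω := by
    exact_mod_cast Fintype.card_pos
  have hx1' : (0:ℝ) < 1 - x := by linarith
  -- main claim, by strong induction on the cardinality of S
  have claimA : ∀ (nn : ℕ) (S : Finset ι), S.card ≤ nn → ∀ j,
      ((B j ∩ NN B S).card : ℝ) ≤ x * (NN B S).card := by
    intro nn
    induction nn with
    | zero =>
      intro S hS j
      have hSempty : S = ∅ := Finset.card_eq_zero.mp (Nat.le_zero.mp hS)
      subst hSempty
      have h := hind j ∅ (by simp)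
      have hNuniv : (NN B (∅ : Finset ι)) = Finset.univ := by
        ext ω; simp [mem_NN]
      rw [hNuniv] at h ⊢
      have h2 := hprob j
      have hpow : x * (1-x)^D ≤ x := by
        nlinarith [pow_le_one₀ (le_of_lt hx1') (by linarith : (1:ℝ) - x ≤ 1) (n := D),
          pow_nonneg (le_of_lt hx1') D]
      calc ((B j ∩ Finset.univ).card : ℝ) = (B j).card := by rw [Finset.inter_univ]
        _ ≤ x * (1-x)^D * Fintype.card Ω := h2
        _ ≤ x * Fintype.card Ω := by nlinarith
        _ = x * (Finset.univ.card : ℝ) := by rw [Finset.card_univ]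
    | succ nn IH =>
      intro S hS j
      by_cases hjS : j ∈ S
      · -- trivial: intersection empty
        have : B j ∩ NN B S = ∅ := by
          ext ω
          simp only [Finset.mem_inter, mem_NN, Finset.notMem_empty, iff_false]
          rintro ⟨h1, h2⟩
          exact h2 j hjS h1
        rw [this]
        simp only [Finset.card_empty, Nat.cast_zero]
        positivity
      · set S₁ := S ∩ Γ j with hS₁
        set S₂ := S \ Γ j with hS₂
        have hSunion : S₂ ∪ S₁ = S := by
          rw [hS₁, hS₂]; rw [Finset.sdiff_union_inter]
        have hcards : S₂.card + S₁.card = S.card := by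
          rw [hS₁, hS₂]
          exact Finset.card_sdiff_add_card_inter S (Γ j)
        have hS2Γ : ∀ k ∈ S₂, k ∉ Γ j := by
          intro k hk
          rw [hS₂, Finset.mem_sdiff] at hk
          exact hk.2
        have heq := hind j S₂ hS2Γ
        have h1 : ((B j ∩ NN B S₂).card : ℝ) ≤ x * (1-x)^D * (NN B S₂).card := by
          have h2 := hprob j
          have hNnn : (0:ℝ) ≤ ((NN B S₂).card : ℝ) := by positivity
          nlinarith
        -- chain: adding the elements of S₁ one at a time
        have chain : ∀ T : Finset ι, T ⊆ S₁ →
            (1-x)^T.card * ((NN B S₂).card : ℝ) ≤ ((NN B (S₂ ∪ T)).card : ℝ) := by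
          intro T
          induction T using Finset.induction_on with
          | empty => intro _; simp
          | @insert a T ha IHT =>
            intro hsub
            have hTsub : T ⊆ S₁ := fun y hy => hsub (Finset.mem_insert_of_mem hy)
            have haS₁ : a ∈ S₁ := hsub (Finset.mem_insert_self a T)
            have hTcard : T.card + 1 ≤ S₁.card := by
              have : insert a T ⊆ S₁ := hsub
              have := Finset.card_le_card this
              rwa [Finset.card_insert_of_notMem ha] at this
            have hUcard : (S₂ ∪ T).card ≤ nn := by
              have h3 := Finset.card_union_le S₂ T
              omega
            have hA := IH (S₂ ∪ T) hUcard a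
            have hsplit : S₂ ∪ insert a T = insert a (S₂ ∪ T) := by
              ext y; simp only [Finset.mem_union, Finset.mem_insert]; tauto
            rw [hsplit, NN_insert]
            have hcard_sdiff : ((NN B (S₂ ∪ T) \ B a).card : ℝ)
                = ((NN B (S₂ ∪ T)).card : ℝ) - ((NN B (S₂ ∪ T) ∩ B a).card : ℝ) := by
              have h0 := Finset.card_sdiff_add_card_inter (NN B (S₂ ∪ T)) (B a)
              have h0' : ((NN B (S₂ ∪ T) \ B a).card : ℝ) + ((NN B (S₂ ∪ T) ∩ B a).card : ℝ)
                  = ((NN B (S₂ ∪ T)).card : ℝ) := by exact_mod_cast h0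
              linarith
            have hIc : ((NN B (S₂ ∪ T) ∩ B a).card : ℝ) = ((B a ∩ NN B (S₂ ∪ T)).card : ℝ) := by
              rw [Finset.inter_comm]
            rw [hcard_sdiff, hIc]
            have hTT := IHT hTsub
            rw [Finset.card_insert_of_notMem ha, pow_succ]
            nlinarith [hA, hTT]
        have hchain := chain S₁ (le_refl _)
        rw [hSunion] at hchain
        -- S₁ has at most D elements
        have hS₁D : S₁.card ≤ D := by
          have hsub : S₁ ⊆ (Γ j).erase j := by
            intro y hy
            rw [hS₁, Finset.mem_inter] at hy
            refine Finset.mem_erase.mpr ⟨?_, hy.2⟩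
            rintro rfl; exact hjS hy.1
          have := Finset.card_le_card hsub
          have h2 := Finset.card_erase_of_mem (hself j)
          have h3 := hΓ j
          omega
        have hmono : ((B j ∩ NN B S).card : ℝ) ≤ ((B j ∩ NN B S₂).card : ℝ) := by
          have : B j ∩ NN B S ⊆ B j ∩ NN B S₂ := by
            intro ω hω
            rw [Finset.mem_inter, mem_NN] at hω ⊢
            exact ⟨hω.1, fun k hk => hω.2 k (Finset.mem_sdiff.mp hk).1⟩
          exact_mod_cast Finset.card_le_card this
        have hpowmono : (1-x)^D ≤ (1-x)^S₁.card := by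
          exact pow_le_pow_of_le_one (le_of_lt hx1') (by linarith) hS₁D
        have hNnn : (0:ℝ) ≤ ((NN B S₂).card : ℝ) := by positivity
        calc ((B j ∩ NN B S).card : ℝ) ≤ ((B j ∩ NN B S₂).card : ℝ) := hmono
          _ ≤ x * (1-x)^D * (NN B S₂).card := h1
          _ = x * ((1-x)^D * (NN B S₂).card) := by ring
          _ ≤ x * ((1-x)^S₁.card * (NN B S₂).card) := by
              have h4 := mul_le_mul_of_nonneg_right hpowmono hNnn
              nlinarith
          _ ≤ x * (NN B S).card := by nlinarith
  -- second claim
  have claimB : ∀ S : Finset ι, (1-x)^S.card * (Fintype.card Ω : ℝ) ≤ ((NN B S).card : ℝ) := by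
    intro S
    induction S using Finset.induction_on with
    | empty =>
      simp only [Finset.card_empty, pow_zero, one_mul]
      have : NN B (∅ : Finset ι) = Finset.univ := by ext ω; simp [mem_NN]
      rw [this, Finset.card_univ]
    | @insert a S ha IHS =>
      rw [NN_insert, Finset.card_insert_of_notMem ha, pow_succ]
      have hA := claimA S.card S (le_refl _) a
      have hcard_sdiff : ((NN B S \ B a).card : ℝ)
          = ((NN B S).card : ℝ) - ((NN B S ∩ B a).card : ℝ) := by
        have h0 := Finset.card_sdiff_add_card_inter (NN B S) (B a)
        have h0' : ((NN B S \ B a).card : ℝ) + ((NN B S ∩ B a).card : ℝ)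
            = ((NN B S).card : ℝ) := by exact_mod_cast h0
        linarith
      have hIc : ((NN B S ∩ B a).card : ℝ) = ((B a ∩ NN B S).card : ℝ) := by
        rw [Finset.inter_comm]
      rw [hcard_sdiff, hIc]
      have hp : (0:ℝ) ≤ (1-x)^S.card := by positivity
      nlinarith
  have hfin := claimB Finset.univ
  have hpos : (0:ℝ) < ((NN B Finset.univ).card : ℝ) := by
    have : (0:ℝ) < (1-x)^(Finset.univ : Finset ι).card * (Fintype.card Ω : ℝ) := by positivity
    linarith
  have : (NN B Finset.univ).Nonempty := by
    rw [← Finset.card_pos]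
    exact_mod_cast hpos
  obtain ⟨ω, hω⟩ := this
  exact ⟨ω, fun j => (mem_NN B Finset.univ ω).mp hω j (Finset.mem_univ j)⟩


lemma exp_neg_one_le_pow (k : ℕ) : Real.exp (-1) ≤ (1 - 1/((k:ℝ)+1))^k := by
  rcases Nat.eq_zero_or_pos k with rfl | hk
  · simpa using Real.exp_le_one_iff.mpr (by norm_num : (-1:ℝ) ≤ 0)
  · have hk' : (0:ℝ) < k := by exact_mod_cast hk
    have h1 : Real.exp (-(1/(k:ℝ))) ≤ 1 - 1/((k:ℝ)+1) := by
      have h2 : 1 + 1/(k:ℝ) ≤ Real.exp (1/(k:ℝ)) := by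
        linarith [Real.add_one_le_exp (1/(k:ℝ))]
      have h3 : (Real.exp (1/(k:ℝ)))⁻¹ ≤ (1 + 1/(k:ℝ))⁻¹ := by
        apply inv_anti₀ (by positivity) h2
      have h4 : (1 + 1/(k:ℝ))⁻¹ = 1 - 1/((k:ℝ)+1) := by
        rw [eq_sub_iff_add_eq]
        field_simp
      rw [h4] at h3
      rw [Real.exp_neg]
      exact h3
    calc Real.exp (-1) = (Real.exp (-(1/(k:ℝ))))^k := by
          rw [← Real.exp_nat_mul]
          congr 1
          field_simp
      _ ≤ (1 - 1/((k:ℝ)+1))^k := pow_le_pow_left₀ (Real.exp_pos _).le h1 k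

def flipEquiv (P : Type*) (d : ℕ) (V : Type*) : ((P × Fin d) → V) ≃ (Fin d → P → V) where
  toFun ω i y := ω (y, i)
  invFun g yi := g yi.2 yi.1
  left_inv _ := rfl
  right_inv _ := rfl

set_option maxHeartbeats 2000000 in
lemma exists_embedding {P : Type*} [PartialOrder P] [Fintype P]
    (n υ δ : ℕ) (hcard : Fintype.card P = n) (hn : 2 ≤ n)
    (hout : ∀ x : P, Set.ncard {y : P | x < y} ≤ υ)
    (hin : ∀ x : P, Set.ncard {y : P | y < x} ≤ δ)
    (d : ℕ)
    (hd : Real.exp 1 * ((υ : ℝ) + 2) *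
        (Real.log n + Real.log ((υ : ℝ) + 2) + Real.log ((δ : ℝ) + 2) + 1) ≤ (d : ℝ)) :
    ∃ f : P → Finset (Fin d), ∀ a b : P, (f a ⊆ f b ↔ a ≤ b) := by
  classical
  set m : ℕ := υ + 2 with hm
  have hm2 : 2 ≤ m := by omega
  -- degree conversions
  have hout' : ∀ a : P, (Finset.univ.filter (fun y => a < y)).card ≤ υ := by
    intro a
    have h1 : {y : P | a < y} = ↑(Finset.univ.filter (fun y => a < y)) := by ext y; simp
    have h2 := hout a
    rwa [h1, Set.ncard_coe_finset] at h2
  have hin' : ∀ a : P, (Finset.univ.filter (fun y => y < a)).card ≤ δ := by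
    intro a
    have h1 : {y : P | y < a} = ↑(Finset.univ.filter (fun y => y < a)) := by ext y; simp
    have h2 := hin a
    rwa [h1, Set.ncard_coe_finset] at h2
  set U : P → Finset P := fun a => Finset.univ.filter (fun y => a ≤ y) with hUdef
  have haU : ∀ a : P, a ∈ U a := fun a => by simp [hUdef]
  have hmemU : ∀ a y : P, y ∈ U a ↔ a ≤ y := by intro a y; simp [hUdef]
  have hUcard : ∀ a : P, (U a).card ≤ υ + 1 := by
    intro a
    have hsub : U a ⊆ insert a (Finset.univ.filter (fun y => a < y)) := by
      intro y hy
      rw [hmemU] at hy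
      rcases eq_or_lt_of_le hy with h | h
      · exact Finset.mem_insert.mpr (Or.inl h.symm)
      · exact Finset.mem_insert.mpr (Or.inr (by simp [h]))
    calc (U a).card ≤ _ := Finset.card_le_card hsub
      _ ≤ (Finset.univ.filter (fun y => a < y)).card + 1 := Finset.card_insert_le _ _
      _ ≤ υ + 1 := by have := hout' a; omega
  have hDycard : ∀ y : P, (Finset.univ.filter (fun z => z ≤ y)).card ≤ δ + 1 := by
    intro y
    have hsub : (Finset.univ.filter (fun z => z ≤ y)) ⊆ insert y (Finset.univ.filter (fun z => z < y)) := by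
      intro z hz
      rw [Finset.mem_filter] at hz
      rcases eq_or_lt_of_le hz.2 with h | h
      · exact Finset.mem_insert.mpr (Or.inl h)
      · exact Finset.mem_insert.mpr (Or.inr (by simp [h]))
    calc _ ≤ _ := Finset.card_le_card hsub
      _ ≤ (Finset.univ.filter (fun z => z < y)).card + 1 := Finset.card_insert_le _ _
      _ ≤ δ + 1 := by have := hin' y; omega
  -- the index type of bad events
  set ι := {q : P × P // ¬ q.1 ≤ q.2} with hι
  set vset : ι → Finset P := fun j => insert j.1.2 (U j.1.1) with hvset
  have hvset_card : ∀ j : ι, (vset j).card ≤ υ + 2 := by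
    intro j
    calc (vset j).card ≤ (U j.1.1).card + 1 := Finset.card_insert_le _ _
      _ ≤ υ + 2 := by have := hUcard j.1.1; omega
  have hbvset : ∀ j : ι, j.1.2 ∈ vset j := fun j => Finset.mem_insert_self _ _
  have hbU : ∀ j : ι, j.1.2 ∉ U j.1.1 := by
    intro j hj
    exact j.2 ((hmemU _ _).mp hj)
  have hUsubvset : ∀ j : ι, U j.1.1 ⊆ vset j := fun j => Finset.subset_insert _ _
  -- the sample space
  haveI : Nonempty (Fin m) := ⟨⟨0, by omega⟩⟩
  haveI : Nonempty ((P × Fin d) → Fin m) := ⟨fun _ => Classical.arbitrary _⟩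
  set B : ι → Finset ((P × Fin d) → Fin m) := fun j => Finset.univ.filter
    (fun ω => ∀ i : Fin d, ¬(ω (j.1.2, i) = 0 ∧ ∀ y ∈ U j.1.1, ω (y, i) ≠ 0)) with hB
  set Γ : ι → Finset ι := fun j => Finset.univ.filter (fun k => ∃ y ∈ vset j, y ∈ vset k) with hΓdef
  set Dp1 : ℕ := n * m * (δ + 2) with hDp1def
  have hDp1pos : 8 ≤ Dp1 := by
    have h1 : 2 * 2 * 2 ≤ n * m * (δ + 2) :=
      Nat.mul_le_mul (Nat.mul_le_mul hn hm2) (by omega)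
    omega
  set D : ℕ := Dp1 - 1 with hD
  have hDD : D + 1 = Dp1 := by omega
  set x : ℝ := 1 / (Dp1 : ℝ) with hx
  have hDp1R : (8:ℝ) ≤ (Dp1:ℝ) := by exact_mod_cast hDp1pos
  have hx0 : 0 < x := by rw [hx]; positivity
  have hx1 : x < 1 := by
    rw [hx, div_lt_one (by linarith)]; linarith
  -- self membership
  have hself : ∀ j : ι, j ∈ Γ j := by
    intro j
    rw [hΓdef, Finset.mem_filter]
    exact ⟨Finset.mem_univ _, ⟨j.1.2, hbvset j, hbvset j⟩⟩
  -- degree bound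
  have hy_card : ∀ y : P, (Finset.univ.filter (fun k : ι => y ∈ vset k)).card ≤ (δ+2) * n := by
    intro y
    have hsplit : (Finset.univ.filter (fun k : ι => y ∈ vset k)) ⊆
        (Finset.univ.filter (fun k : ι => y = k.1.2)) ∪ (Finset.univ.filter (fun k : ι => k.1.1 ≤ y)) := by
      intro k hk
      rw [Finset.mem_filter, hvset] at hk
      rcases Finset.mem_insert.mp hk.2 with h | h
      · exact Finset.mem_union_left _ (Finset.mem_filter.mpr ⟨Finset.mem_univ _, h⟩)
      · exact Finset.mem_union_right _ (Finset.mem_filter.mpr ⟨Finset.mem_univ _, (hmemU _ _).mp h⟩)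
    have hc1 : (Finset.univ.filter (fun k : ι => y = k.1.2)).card ≤ n := by
      rw [← hcard, ← Finset.card_univ]
      apply Finset.card_le_card_of_injOn (fun k => k.1.1) (fun _ _ => Finset.mem_univ _)
      intro k hk k' hk' hkk
      simp only [Finset.coe_filter, Set.mem_setOf_eq] at hk hk'
      apply Subtype.ext
      apply Prod.ext hkk
      rw [← hk.2, ← hk'.2]
    have hc2 : (Finset.univ.filter (fun k : ι => k.1.1 ≤ y)).card ≤ (δ + 1) * n := by
      have hinj : (Finset.univ.filter (fun k : ι => k.1.1 ≤ y)).card ≤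
          ((Finset.univ.filter (fun z : P => z ≤ y)) ×ˢ (Finset.univ : Finset P)).card := by
        apply Finset.card_le_card_of_injOn (fun k => k.1)
        · intro k hk
          rw [Finset.mem_coe, Finset.mem_filter] at hk
          rw [Finset.mem_coe, Finset.mem_product]
          exact ⟨Finset.mem_filter.mpr ⟨Finset.mem_univ _, hk.2⟩, Finset.mem_univ _⟩
        · intro k _ k' _ hkk
          exact Subtype.ext hkk
      rw [Finset.card_product, Finset.card_univ, hcard] at hinj
      calc (Finset.univ.filter (fun k : ι => k.1.1 ≤ y)).card
          ≤ (Finset.univ.filter (fun z : P => z ≤ y)).card * n := hinj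
        _ ≤ (δ + 1) * n := Nat.mul_le_mul_right n (hDycard y)
    calc (Finset.univ.filter (fun k : ι => y ∈ vset k)).card
        ≤ ((Finset.univ.filter (fun k : ι => y = k.1.2)) ∪
            (Finset.univ.filter (fun k : ι => k.1.1 ≤ y))).card := Finset.card_le_card hsplit
      _ ≤ _ + _ := Finset.card_union_le _ _
      _ ≤ n + (δ + 1) * n := Nat.add_le_add hc1 hc2
      _ = (δ + 2) * n := by ring
  have hΓcard : ∀ j : ι, (Γ j).card ≤ D + 1 := by
    intro j
    rw [hDD]
    have hsub : Γ j ⊆ (vset j).biUnion (fun y => Finset.univ.filter (fun k : ι => y ∈ vset k)) := by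
      intro k hk
      rw [hΓdef, Finset.mem_filter] at hk
      obtain ⟨y, hy1, hy2⟩ := hk.2
      exact Finset.mem_biUnion.mpr ⟨y, hy1, Finset.mem_filter.mpr ⟨Finset.mem_univ _, hy2⟩⟩
    calc (Γ j).card ≤ _ := Finset.card_le_card hsub
      _ ≤ ∑ y ∈ vset j, (Finset.univ.filter (fun k : ι => y ∈ vset k)).card := Finset.card_biUnion_le
      _ ≤ (vset j).card * ((δ+2) * n) := by
          apply Finset.sum_le_card_nsmul
          intro y _
          exact hy_card y
      _ ≤ (υ + 2) * ((δ+2) * n) := Nat.mul_le_mul_right _ (hvset_card j)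
      _ = Dp1 := by rw [hDp1def, hm]; ring
  -- probability bound
  have hΩcard : Fintype.card ((P × Fin d) → Fin m) = m ^ (n * d) := by
    rw [Fintype.card_fun, Fintype.card_fin, Fintype.card_prod, Fintype.card_fin, hcard]
  have hmcast : (m:ℝ) = (υ:ℝ) + 2 := by rw [hm]; push_cast; ring
  have hem : (0:ℝ) < Real.exp 1 * m := by
    have : (0:ℝ) < m := by rw [hmcast]; positivity
    positivity
  have hprob : ∀ j : ι, ((B j).card : ℝ) ≤ x * (1-x)^D * Fintype.card ((P × Fin d) → Fin m) := by
    intro j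
    set u := (U j.1.1).card with hu
    set W : Finset (P → Fin m) := Finset.univ.filter
      (fun h => ¬(h j.1.2 = 0 ∧ ∀ y ∈ U j.1.1, h y ≠ 0)) with hW
    set G : Finset (P → Fin m) := Finset.univ.filter
      (fun h => h j.1.2 = 0 ∧ ∀ y ∈ U j.1.1, h y ≠ 0) with hG
    have hBcard : (B j).card = W.card ^ d := by
      have himg : (B j).image (flipEquiv P d (Fin m)) = Fintype.piFinset (fun _ : Fin d => W) := by
        ext g
        simp only [Finset.mem_image, Fintype.mem_piFinset]
        constructor
        · rintro ⟨ω, hω, rfl⟩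
          intro i
          rw [hW, Finset.mem_filter]
          rw [hB, Finset.mem_filter] at hω
          exact ⟨Finset.mem_univ _, hω.2 i⟩
        · intro hg
          refine ⟨(flipEquiv P d (Fin m)).symm g, ?_, Equiv.apply_symm_apply _ g⟩
          rw [hB, Finset.mem_filter]
          refine ⟨Finset.mem_univ _, fun i => ?_⟩
          have h6 := hg i
          rw [hW, Finset.mem_filter] at h6
          exact h6.2
      calc (B j).card = ((B j).image (flipEquiv P d (Fin m))).card :=
            (Finset.card_image_of_injective _ (Equiv.injective _)).symm
        _ = W.card ^ d := by
            rw [himg, Fintype.card_piFinset]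
            simp [Finset.prod_const]
    set A : P → Finset (Fin m) := fun y =>
      if y = j.1.2 then {0} else if y ∈ U j.1.1 then Finset.univ \ {0} else Finset.univ with hA
    have hGpi : G = Fintype.piFinset A := by
      ext h
      rw [hG, Finset.mem_filter, Fintype.mem_piFinset]
      constructor
      · rintro ⟨-, h1, h2⟩ y
        simp only [hA]
        by_cases hyb : y = j.1.2
        · subst hyb; rw [if_pos rfl]; simpa using h1
        · rw [if_neg hyb]
          by_cases hyU : y ∈ U j.1.1
          · rw [if_pos hyU]; simpa using h2 y hyU
          · rw [if_neg hyU]; exact Finset.mem_univ _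
      · intro hh
        refine ⟨Finset.mem_univ _, ?_, ?_⟩
        · have h7 := hh j.1.2
          simp only [hA, if_pos rfl] at h7
          simpa using h7
        · intro y hy
          have h7 := hh y
          have hyb : y ≠ j.1.2 := by rintro rfl; exact hbU j hy
          simp only [hA] at h7
          rw [if_neg hyb, if_pos hy] at h7
          simpa using h7
    have hGcard : G.card = (m - 1) ^ u * m ^ (n - (u + 1)) := by
      rw [hGpi, Fintype.card_piFinset]
      rw [← Finset.prod_mul_prod_compl (insert j.1.2 (U j.1.1))]
      have e1 : ∏ y ∈ insert j.1.2 (U j.1.1), (A y).card = (m-1)^u := by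
        rw [Finset.prod_insert (hbU j)]
        have e1a : (A j.1.2).card = 1 := by simp only [hA]; simp
        rw [e1a, one_mul]
        have e1b : ∀ y ∈ U j.1.1, (A y).card = m - 1 := by
          intro y hy
          have hyb : y ≠ j.1.2 := by rintro rfl; exact hbU j hy
          simp only [hA]
          rw [if_neg hyb, if_pos hy]
          rw [Finset.card_sdiff_of_subset (by simp)]
          simp
        rw [Finset.prod_congr rfl e1b, Finset.prod_const]
      have e2 : ∏ y ∈ (insert j.1.2 (U j.1.1))ᶜ, (A y).card = m ^ (n - (u+1)) := by
        have e2a : ∀ y ∈ (insert j.1.2 (U j.1.1))ᶜ, (A y).card = m := by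
          intro y hy
          rw [Finset.mem_compl, Finset.mem_insert] at hy
          push_neg at hy
          simp only [hA]
          rw [if_neg hy.1, if_neg hy.2]
          simp
        rw [Finset.prod_congr rfl e2a, Finset.prod_const, Finset.card_compl,
          Finset.card_insert_of_notMem (hbU j), hcard]
      rw [e1, e2]
    -- numeric facts
    have hmpos : (0:ℝ) < (m:ℝ) := by rw [hmcast]; positivity
    have huU : 1 ≤ u := by
      rw [hu]
      exact Finset.card_pos.mpr ⟨j.1.1, haU _⟩
    have huυ : u ≤ υ + 1 := hUcard _
    have hun : u + 1 ≤ n := by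
      have h20 := Finset.card_le_univ (insert j.1.2 (U j.1.1))
      rw [Finset.card_insert_of_notMem (hbU j), hcard] at h20
      rw [hu]
      exact h20
    have hGlow : (1 / (Real.exp 1 * m)) * (m:ℝ)^n ≤ (G.card : ℝ) := by
      rw [hGcard]
      rw [Nat.cast_mul, Nat.cast_pow, Nat.cast_pow, Nat.cast_sub (by omega : 1 ≤ m), Nat.cast_one]
      have hbase : ((m:ℝ)-1)/m = 1 - 1/((↑(υ+1):ℝ)+1) := by
        rw [hmcast]; push_cast; field_simp; ring
      have h8 : Real.exp (-1) ≤ (((m:ℝ)-1)/m)^(υ+1) := by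
        rw [hbase]
        exact exp_neg_one_le_pow (υ+1)
      have hbase01 : 0 ≤ ((m:ℝ)-1)/m := by
        apply div_nonneg _ hmpos.le
        have hc0 : (0:ℝ) ≤ (υ:ℝ) := Nat.cast_nonneg υ
        rw [hmcast]; linarith
      have hbase1 : ((m:ℝ)-1)/m ≤ 1 := by
        rw [div_le_one hmpos]; linarith
      have h10 : Real.exp (-1) ≤ (((m:ℝ)-1)/m)^u :=
        le_trans h8 (pow_le_pow_of_le_one hbase01 hbase1 huυ)
      rw [div_pow] at h10
      have hmupos : (0:ℝ) < (m:ℝ)^u := by positivity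
      have h10' : (m:ℝ)^u * Real.exp (-1) ≤ ((m:ℝ)-1)^u := by
        calc (m:ℝ)^u * Real.exp (-1) ≤ (m:ℝ)^u * (((m:ℝ)-1)^u / (m:ℝ)^u) :=
              mul_le_mul_of_nonneg_left h10 hmupos.le
          _ = ((m:ℝ)-1)^u := by field_simp
      have h11 : 1/(Real.exp 1 * m) * (m:ℝ)^(u+1) ≤ ((m:ℝ)-1)^u := by
        have he1 : (0:ℝ) < Real.exp 1 := Real.exp_pos 1
        have hrw : 1/(Real.exp 1 * m) * (m:ℝ)^(u+1) = (m:ℝ)^u * Real.exp (-1) := by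
          rw [pow_succ, Real.exp_neg]
          field_simp
        rw [hrw]
        exact h10'
      have hsplit : (m:ℝ)^n = (m:ℝ)^(u+1) * (m:ℝ)^(n-(u+1)) := by
        rw [← pow_add]
        congr 1
        omega
      rw [hsplit]
      calc 1/(Real.exp 1 * m) * ((m:ℝ)^(u+1) * (m:ℝ)^(n-(u+1)))
          = (1/(Real.exp 1 * m) * (m:ℝ)^(u+1)) * (m:ℝ)^(n-(u+1)) := by ring
        _ ≤ ((m:ℝ)-1)^u * (m:ℝ)^(n-(u+1)) :=
            mul_le_mul_of_nonneg_right h11 (by positivity)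
    have hcardfun : Fintype.card (P → Fin m) = m ^ n := by
      rw [Fintype.card_fun, Fintype.card_fin, hcard]
    have hGle : G.card ≤ m ^ n := by
      calc G.card ≤ Fintype.card (P → Fin m) := Finset.card_le_univ G
        _ = m ^ n := hcardfun
    have hWcard : (W.card : ℝ) = (m:ℝ)^n - (G.card:ℝ) := by
      have hWG : W = Finset.univ \ G := by
        rw [hW, hG, Finset.filter_not]
      have h21 : W.card = m ^ n - G.card := by
        rw [hWG, Finset.card_sdiff_of_subset (Finset.subset_univ _), Finset.card_univ, hcardfun]
      rw [h21, Nat.cast_sub hGle, Nat.cast_pow]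
    have hWle : (W.card : ℝ) ≤ (1 - 1/(Real.exp 1 * m)) * (m:ℝ)^n := by
      have hre : (1 - 1/(Real.exp 1 * (m:ℝ))) * (m:ℝ)^n
          = (m:ℝ)^n - (1/(Real.exp 1 * (m:ℝ))) * (m:ℝ)^n := by ring
      rw [hWcard, hre]
      linarith [hGlow]
    have hWpos : (0:ℝ) ≤ (W.card:ℝ) := Nat.cast_nonneg _
    have h1em : (0:ℝ) ≤ 1 - 1/(Real.exp 1 * m) := by
      have h22 : (1:ℝ) ≤ Real.exp 1 * m := by nlinarith [Real.add_one_le_exp (1:ℝ), hmcast]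
      have h23 : 1/(Real.exp 1 * (m:ℝ)) ≤ 1 := by
        rw [div_le_one hem]; exact h22
      linarith
    have hchain1 : ((B j).card : ℝ) ≤ (1 - 1/(Real.exp 1 * m))^d * (m:ℝ)^(n*d) := by
      rw [hBcard, Nat.cast_pow]
      calc ((W.card:ℝ))^d ≤ ((1 - 1/(Real.exp 1*m)) * (m:ℝ)^n)^d := pow_le_pow_left₀ hWpos hWle d
        _ = (1 - 1/(Real.exp 1*m))^d * (m:ℝ)^(n*d) := by rw [mul_pow, ← pow_mul]
    have hd2 : Real.exp 1 * m * (Real.log Dp1 + 1) ≤ d := by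
      have hn2R : (2:ℝ) ≤ (n:ℝ) := by exact_mod_cast hn
      have hδpos : (0:ℝ) < (δ:ℝ) + 2 := by positivity
      have hlog : Real.log (Dp1:ℝ) = Real.log n + Real.log m + Real.log ((δ:ℝ)+2) := by
        have hDc : (Dp1:ℝ) = (n:ℝ) * (m:ℝ) * ((δ:ℝ)+2) := by rw [hDp1def]; push_cast; ring
        rw [hDc, Real.log_mul (by positivity) (by linarith),
          Real.log_mul (by linarith) (by linarith)]
      rw [hlog, hmcast]
      calc Real.exp 1 * ((υ:ℝ)+2) * (Real.log n + Real.log ((υ:ℝ)+2) + Real.log ((δ:ℝ)+2) + 1)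
          = Real.exp 1 * ((υ:ℝ)+2) * (Real.log n + Real.log ((υ:ℝ)+2) + Real.log ((δ:ℝ)+2) + 1) := rfl
        _ ≤ d := by rw [← hmcast]; rw [hmcast]; exact hd
    have hchain2 : (1 - 1/(Real.exp 1 * m))^d ≤ Real.exp (-((d:ℝ)/(Real.exp 1 * m))) := by
      have h12 : 1 - 1/(Real.exp 1*(m:ℝ)) ≤ Real.exp (-(1/(Real.exp 1*(m:ℝ)))) := by
        linarith [Real.add_one_le_exp (-(1/(Real.exp 1*(m:ℝ))))]
      calc (1 - 1/(Real.exp 1*(m:ℝ)))^d ≤ (Real.exp (-(1/(Real.exp 1*(m:ℝ)))))^d :=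
            pow_le_pow_left₀ h1em h12 d
        _ = Real.exp (-((d:ℝ)/(Real.exp 1 * m))) := by
            rw [← Real.exp_nat_mul]
            congr 1
            ring
    have hchain3 : Real.exp (-((d:ℝ)/(Real.exp 1 * m))) ≤ x * (1-x)^D := by
      have hDp1posR : (0:ℝ) < (Dp1:ℝ) := by linarith
      have h13 : Real.exp (-((d:ℝ)/(Real.exp 1*m))) ≤ Real.exp (-(Real.log (Dp1:ℝ) + 1)) := by
        apply Real.exp_le_exp.mpr
        have h24 : Real.log (Dp1:ℝ) + 1 ≤ (d:ℝ)/(Real.exp 1 * m) := by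
          rw [le_div_iff₀ hem]
          calc (Real.log ↑Dp1 + 1) * (Real.exp 1 * ↑m) = Real.exp 1 * ↑m * (Real.log ↑Dp1 + 1) := by ring
            _ ≤ d := hd2
        linarith
      have h14 : Real.exp (-(Real.log (Dp1:ℝ) + 1)) = (1/(Dp1:ℝ)) * Real.exp (-1) := by
        rw [neg_add, Real.exp_add, Real.exp_neg (Real.log (Dp1:ℝ)), Real.exp_log hDp1posR]
        ring
      have h15 : Real.exp (-1) ≤ (1-x)^D := by
        have h25 := exp_neg_one_le_pow D
        have hDcast : ((D:ℝ)+1) = (Dp1:ℝ) := by exact_mod_cast hDD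
        rw [hDcast] at h25
        rw [hx]
        exact h25
      calc Real.exp (-((d:ℝ)/(Real.exp 1*m))) ≤ (1/(Dp1:ℝ)) * Real.exp (-1) := by
            rw [← h14]; exact h13
        _ ≤ (1/(Dp1:ℝ)) * (1-x)^D := mul_le_mul_of_nonneg_left h15 (by positivity)
        _ = x * (1-x)^D := by rw [hx]
    rw [hΩcard]
    have hfin1 : (0:ℝ) ≤ (m:ℝ)^(n*d) := by positivity
    calc ((B j).card:ℝ) ≤ (1 - 1/(Real.exp 1*m))^d * (m:ℝ)^(n*d) := hchain1
      _ ≤ Real.exp (-((d:ℝ)/(Real.exp 1*m))) * (m:ℝ)^(n*d) :=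
          mul_le_mul_of_nonneg_right hchain2 hfin1
      _ ≤ (x * (1-x)^D) * (m:ℝ)^(n*d) := mul_le_mul_of_nonneg_right hchain3 hfin1
      _ = x * (1-x)^D * ((m ^ (n*d) : ℕ) : ℝ) := by push_cast; ring
  -- independence
  have hind : ∀ (j : ι) (S : Finset ι), (∀ k ∈ S, k ∉ Γ j) →
      (((B j ∩ NN B S).card : ℝ)) * Fintype.card ((P × Fin d) → Fin m) = (B j).card * ((NN B S).card : ℝ) := by
    intro j S hS
    have hE : ∀ ω ω' : (P × Fin d) → Fin m,
        (∀ c : P × Fin d, c.1 ∈ vset j → ω c = ω' c) → (ω ∈ B j ↔ ω' ∈ B j) := by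
      have haux : ∀ ω ω' : (P × Fin d) → Fin m, (∀ c : P × Fin d, c.1 ∈ vset j → ω c = ω' c) →
          ω ∈ B j → ω' ∈ B j := by
        intro ω ω' hag hω
        rw [hB, Finset.mem_filter] at hω ⊢
        refine ⟨Finset.mem_univ _, fun i hcontra => ?_⟩
        apply hω.2 i
        obtain ⟨h1, h2⟩ := hcontra
        constructor
        · rw [hag (j.1.2, i) (hbvset j)]; exact h1
        · intro y hy
          rw [hag (y, i) (hUsubvset j hy)]
          exact h2 y hy
      intro ω ω' hag
      exact ⟨haux ω ω' hag, haux ω' ω (fun c hc => (hag c hc).symm)⟩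
    have hF : ∀ ω ω' : (P × Fin d) → Fin m,
        (∀ c : P × Fin d, c.1 ∉ vset j → ω c = ω' c) → (ω ∈ NN B S ↔ ω' ∈ NN B S) := by
      have haux : ∀ ω ω' : (P × Fin d) → Fin m, (∀ c : P × Fin d, c.1 ∉ vset j → ω c = ω' c) →
          ω ∈ NN B S → ω' ∈ NN B S := by
        intro ω ω' hag hω
        rw [mem_NN] at hω ⊢
        intro k hk hωk
        apply hω k hk
        have hdisj : ∀ y ∈ vset k, y ∉ vset j := by
          have h5 := hS k hk
          rw [hΓdef, Finset.mem_filter] at h5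
          push_neg at h5
          intro y hy hyj
          exact h5 (Finset.mem_univ _) y hyj hy
        rw [hB, Finset.mem_filter] at hωk ⊢
        refine ⟨Finset.mem_univ _, fun i hcontra => ?_⟩
        apply hωk.2 i
        obtain ⟨h1, h2⟩ := hcontra
        constructor
        · rw [← hag (k.1.2, i) (hdisj _ (hbvset k))]; exact h1
        · intro y hy
          rw [← hag (y, i) (hdisj _ (hUsubvset k hy))]
          exact h2 y hy
      intro ω ω' hag
      exact ⟨haux ω ω' hag, haux ω' ω (fun c hc => (hag c hc).symm)⟩
    have key := indep_card_mul (fun c : P × Fin d => c.1 ∈ vset j) (B j) (NN B S) hE hF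
    exact_mod_cast key
  obtain ⟨ω, hω⟩ := lll B Γ x D hx0 hx1 hself hΓcard hprob hind
  refine ⟨fun a => Finset.univ.filter (fun i => ∀ y : P, a ≤ y → ω (y, i) ≠ 0), fun a b => ?_⟩
  constructor
  · intro hsub
    by_contra hab
    set j : ι := ⟨(a, b), hab⟩ with hj
    have h1 := hω j
    rw [hB, Finset.mem_filter] at h1
    push_neg at h1
    obtain ⟨i, h2, h3⟩ := h1 (Finset.mem_univ _)
    have hia : i ∈ Finset.univ.filter (fun i => ∀ y : P, a ≤ y → ω (y, i) ≠ 0) := by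
      rw [Finset.mem_filter]
      exact ⟨Finset.mem_univ _, fun y hay => h3 y ((hmemU a y).mpr hay)⟩
    have hib := hsub hia
    rw [Finset.mem_filter] at hib
    exact hib.2 b le_rfl h2
  · intro hab i hi
    rw [Finset.mem_filter] at hi ⊢
    exact ⟨Finset.mem_univ _, fun y hby => hi.2 y (le_trans hab hby)⟩


/-- A finite poset of cardinality `n ≥ 2` with maximum outdegree at most `υ` and
maximum indegree at most `δ` has 2-dimension at most
`⌈e(υ+2)(log n + log(υ+2) + log(δ+2) + 1)⌉`. -/
theorem dim2_le_of_outdegree_indegree (P : Type*) [PartialOrder P] [Fintype P]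
    (n υ δ : ℕ) (hcard : Fintype.card P = n) (hn : 2 ≤ n)
    (hout : ∀ x : P, Set.ncard {y : P | x < y} ≤ υ)
    (hin : ∀ x : P, Set.ncard {y : P | y < x} ≤ δ) :
    dim2 P ≤ ⌈Real.exp 1 * ((υ : ℝ) + 2) *
        (Real.log n + Real.log ((υ : ℝ) + 2) + Real.log ((δ : ℝ) + 2) + 1)⌉₊ := by
  have h := exists_embedding n υ δ hcard hn hout hin
    (⌈Real.exp 1 * ((υ : ℝ) + 2) *
        (Real.log n + Real.log ((υ : ℝ) + 2) + Real.log ((δ : ℝ) + 2) + 1)⌉₊)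
    (Nat.le_ceil _)
  exact Nat.sInf_le h
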